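/- Let S be a real symmetric positive definite 2N×2N matrix. Then det S ≤ det Ṡ, with equality if and only if S̈ = 0. In particular the generalized likelihood ratio statistic T = det S / det Ṡ always lies in (0, 1]. -/

import Mathlib

open Matrix Polynomial

/-- The proper part `Ċ` of a real `2N × 2N` matrix `C` with blocks `[[A, B],[B′, D]]`:
`Ċ = (1/2)·[[A+D, B−B′],[B′−B, A+D]]`. -/
noncomputable def dotPart {N : ℕ} (C : Matrix (Fin N ⊕ Fin N) (Fin N ⊕ Fin N) ℝ) :
    Matrix (Fin N ⊕ Fin N) (Fin N ⊕ Fin N) ℝ :=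
  (1/2 : ℝ) • Matrix.fromBlocks (C.toBlocks₁₁ + C.toBlocks₂₂) (C.toBlocks₁₂ - C.toBlocks₂₁)
    (C.toBlocks₂₁ - C.toBlocks₁₂) (C.toBlocks₁₁ + C.toBlocks₂₂)

/-- The improper part `C̈ = C − Ċ`. -/
noncomputable def ddotPart {N : ℕ} (C : Matrix (Fin N ⊕ Fin N) (Fin N ⊕ Fin N) ℝ) :
    Matrix (Fin N ⊕ Fin N) (Fin N ⊕ Fin N) ℝ :=
  C - dotPart C

section Aux

variable {n : Type*} [Fintype n] [DecidableEq n]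

lemma auxPosDefSmul {A : Matrix n n ℝ} (hA : A.PosDef) {c : ℝ} (hc : 0 < c) :
    (c • A).PosDef := by
  refine PosDef.of_dotProduct_mulVec_pos ?_ (fun x hx => ?_)
  · unfold Matrix.IsHermitian
    rw [conjTranspose_smul, hA.1]
    simp
  · rw [smul_mulVec, dotProduct_smul]
    exact smul_pos hc (hA.dotProduct_mulVec_pos hx)

lemma auxPosSemidefSmul {A : Matrix n n ℝ} (hA : A.PosSemidef) {c : ℝ} (hc : 0 ≤ c) :
    (c • A).PosSemidef := by
  refine PosSemidef.of_dotProduct_mulVec_nonneg ?_ (fun x => ?_)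
  · unfold Matrix.IsHermitian
    rw [conjTranspose_smul, hA.1]
    simp
  · rw [smul_mulVec, dotProduct_smul]
    exact smul_nonneg hc (hA.dotProduct_mulVec_nonneg x)

lemma auxPosDefOfPsd {A : Matrix n n ℝ} (hA : A.PosSemidef) (hdet : A.det ≠ 0) :
    A.PosDef := by
  refine PosDef.of_dotProduct_mulVec_pos hA.1 (fun x hx => ?_)
  rcases (hA.dotProduct_mulVec_nonneg x).lt_or_eq with h | h
  · exact h
  · exfalso
    have h0 : A *ᵥ x = 0 := (hA.dotProduct_mulVec_zero_iff x).mp h.symm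
    have hinj : Function.Injective (A.mulVec) :=
      Matrix.mulVec_injective_iff_isUnit.mpr ((Matrix.isUnit_iff_isUnit_det _).2 hdet.isUnit)
    exact hx (hinj (by simpa using h0))

lemma auxCoreDetLeOne {A : Matrix n n ℝ} (hA : A.PosDef) (h1 : (1 - A).PosSemidef) :
    A.det ≤ 1 ∧ (A.det = 1 ↔ A = 1) := by
  have hherm := hA.1
  have hev : ∀ i, 0 < hherm.eigenvalues i := hA.eigenvalues_pos
  have hle : ∀ i, hherm.eigenvalues i ≤ 1 := by
    intro i
    set v : n → ℝ := ⇑(hherm.eigenvectorBasis i) with hv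
    have hnorm : star v ⬝ᵥ v = 1 := by
      have h := hherm.eigenvectorBasis.orthonormal.1 i
      have : (star v ⬝ᵥ v) =
          (inner ℝ (hherm.eigenvectorBasis i) (hherm.eigenvectorBasis i) : ℝ) := by
        rw [EuclideanSpace.inner_eq_star_dotProduct]; exact dotProduct_comm _ _
      rw [this, real_inner_self_eq_norm_sq, h]; norm_num
    have h0 := h1.dotProduct_mulVec_nonneg v
    rw [sub_mulVec, one_mulVec, hherm.mulVec_eigenvectorBasis, dotProduct_sub,
      dotProduct_smul, hnorm] at h0
    simp only [smul_eq_mul, mul_one] at h0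
    linarith
  have hdet : A.det = ∏ i, hherm.eigenvalues i := by
    simpa using hherm.det_eq_prod_eigenvalues
  constructor
  · rw [hdet]
    exact Finset.prod_le_one (fun i _ => (hev i).le) (fun i _ => hle i)
  constructor
  · intro h
    have hall : ∀ i, hherm.eigenvalues i = 1 := by
      intro j
      by_contra hne
      have hj : hherm.eigenvalues j < 1 := lt_of_le_of_ne (hle j) hne
      have hrest : ∏ i ∈ Finset.univ.erase j, hherm.eigenvalues i ≤ 1 :=
        Finset.prod_le_one (fun i _ => (hev i).le) (fun i _ => hle i)
      have hsplit : hherm.eigenvalues j * ∏ i ∈ Finset.univ.erase j, hherm.eigenvalues i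
          = ∏ i, hherm.eigenvalues i := Finset.mul_prod_erase _ _ (Finset.mem_univ j)
      have hpos : (0:ℝ) < ∏ i ∈ Finset.univ.erase j, hherm.eigenvalues i :=
        Finset.prod_pos (fun i _ => hev i)
      rw [hdet, ← hsplit] at h
      nlinarith
    have hspec := hherm.spectral_theorem
    rw [hspec]
    have hfun : (RCLike.ofReal ∘ hherm.eigenvalues : n → ℝ) = fun _ => 1 := by
      funext i; simp [hall i]
    have hdiag : Matrix.diagonal (RCLike.ofReal ∘ hherm.eigenvalues) = (1 : Matrix n n ℝ) := by
      rw [hfun]; simp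
    rw [hdiag, map_one]
  · intro h; rw [h, det_one]

lemma auxConjReal (A : Matrix n n ℝ) : Aᴴ = Aᵀ := by
  ext i j; simp [conjTranspose_apply]

end Aux

def Jmat (N : ℕ) : Matrix (Fin N ⊕ Fin N) (Fin N ⊕ Fin N) ℝ := fromBlocks 0 1 (-1) 0

lemma Jmat_mul_transpose (N : ℕ) : Jmat N * (Jmat N)ᵀ = 1 := by
  simp [Jmat, fromBlocks_transpose, fromBlocks_multiply, ← fromBlocks_one]

lemma dotPart_eq {N : ℕ} (C : Matrix (Fin N ⊕ Fin N) (Fin N ⊕ Fin N) ℝ) :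
    dotPart C = (1/2 : ℝ) • (C + Jmat N * C * (Jmat N)ᵀ) := by
  have hC : C = fromBlocks C.toBlocks₁₁ C.toBlocks₁₂ C.toBlocks₂₁ C.toBlocks₂₂ :=
    (fromBlocks_toBlocks C).symm
  rw [dotPart]
  conv_rhs => rw [hC]
  rw [Jmat, fromBlocks_transpose, fromBlocks_multiply, fromBlocks_multiply, fromBlocks_add]
  congr 1
  ext (i | i) (j | j) <;>
    simp [toBlocks₁₁, toBlocks₁₂, toBlocks₂₁, toBlocks₂₂] <;> ring

theorem statement9 (N : ℕ) (hN : 1 ≤ N) (S : Matrix (Fin N ⊕ Fin N) (Fin N ⊕ Fin N) ℝ) (hS : S.PosDef) :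
    S.det ≤ (dotPart S).det ∧
    (S.det = (dotPart S).det ↔ ddotPart S = 0) ∧
    0 < S.det / (dotPart S).det ∧ S.det / (dotPart S).det ≤ 1 := by
  classical
  set J := Jmat N with hJdef
  have hJJ : J * Jᵀ = 1 := Jmat_mul_transpose N
  set T := J * S * Jᵀ with hTdef
  -- T is positive definite with the same determinant
  have hJdet : J.det * Jᵀ.det = 1 := by
    rw [← det_mul, hJJ, det_one]
  have hT_det : T.det = S.det := by
    rw [hTdef, det_mul, det_mul]
    calc J.det * S.det * Jᵀ.det = (J.det * Jᵀ.det) * S.det := by ring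
    _ = S.det := by rw [hJdet, one_mul]
  have hT_psd : T.PosSemidef := by
    have := hS.posSemidef.mul_mul_conjTranspose_same J
    rwa [auxConjReal] at this
  have hT_pd : T.PosDef := auxPosDefOfPsd hT_psd (by rw [hT_det]; exact hS.det_pos.ne')
  -- dotPart S = (1/2)(S + T) is positive definite
  have hM_eq : dotPart S = (1/2 : ℝ) • (S + T) := dotPart_eq S
  have hM_pd : (dotPart S).PosDef := by
    rw [hM_eq]
    exact auxPosDefSmul (hS.add hT_pd) (by norm_num)
  have hM_herm : (dotPart S)ᴴ = dotPart S := hM_pd.1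
  have hMdet_pos : 0 < (dotPart S).det := hM_pd.det_pos
  have hE_eq : ddotPart S = S - dotPart S := rfl
  have hE_herm : (ddotPart S)ᴴ = ddotPart S := by
    rw [hE_eq, conjTranspose_sub, hS.1, hM_herm]
  have hS_eq : dotPart S + ddotPart S = S := by rw [hE_eq]; abel
  have hT_eq : dotPart S - ddotPart S = T := by
    rw [hE_eq, hM_eq]
    module
  -- the Schur-complement matrix  M - E M⁻¹ E  is positive semidefinite
  haveI : Invertible (dotPart S) := hM_pd.isUnit.invertible
  set P : Matrix ((Fin N ⊕ Fin N) ⊕ (Fin N ⊕ Fin N)) ((Fin N ⊕ Fin N) ⊕ (Fin N ⊕ Fin N)) ℝ :=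
    fromBlocks 1 1 1 (-1) with hPdef
  have hP_herm : Pᴴ = P := by
    rw [hPdef, fromBlocks_conjTranspose]
    simp
  have hD0_psd : (fromBlocks S 0 0 T).PosSemidef := by
    refine PosSemidef.of_dotProduct_mulVec_nonneg ?_ (fun x => ?_)
    · unfold Matrix.IsHermitian
      rw [fromBlocks_conjTranspose, hS.1, hT_psd.1]
      simp
    · have hsplit : star x ⬝ᵥ (fromBlocks S 0 0 T) *ᵥ x =
          star (x ∘ Sum.inl) ⬝ᵥ S *ᵥ (x ∘ Sum.inl) +
          star (x ∘ Sum.inr) ⬝ᵥ T *ᵥ (x ∘ Sum.inr) := by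
        simp [fromBlocks_mulVec, dotProduct, Fintype.sum_sum_type]
      rw [hsplit]
      exact add_nonneg (hS.posSemidef.dotProduct_mulVec_nonneg _) (hT_psd.dotProduct_mulVec_nonneg _)
  have hG_eq : (fromBlocks (dotPart S) (ddotPart S) (ddotPart S)ᴴ (dotPart S)) =
      (1/2 : ℝ) • (Pᴴ * (fromBlocks S 0 0 T) * P) := by
    rw [hE_herm, hP_herm, hPdef, fromBlocks_multiply, fromBlocks_multiply, fromBlocks_smul]
    simp only [Matrix.one_mul, Matrix.mul_one, Matrix.zero_mul, Matrix.mul_zero,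
      Matrix.neg_mul, Matrix.mul_neg, add_zero, zero_add, neg_neg]
    rw [fromBlocks_inj]
    refine ⟨hM_eq, ?_, ?_, hM_eq⟩ <;>
      · rw [hE_eq, hM_eq]; module
  have hG_psd : (fromBlocks (dotPart S) (ddotPart S) (ddotPart S)ᴴ (dotPart S)).PosSemidef := by
    rw [hG_eq]
    exact auxPosSemidefSmul (hD0_psd.conjTranspose_mul_mul_same P) (by norm_num)
  have hSchur := (PosDef.fromBlocks₁₁ _ _ hM_pd).mp hG_psd
  rw [hE_herm] at hSchur
  -- `hSchur : (dotPart S - ddotPart S * (dotPart S)⁻¹ * ddotPart S).PosSemidef`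
  have hMdet_ne : (dotPart S).det ≠ 0 := hMdet_pos.ne'
  have hMu : IsUnit (dotPart S).det := isUnit_iff_ne_zero.mpr hMdet_ne
  have h1 : dotPart S * (dotPart S)⁻¹ = 1 := mul_nonsing_inv _ hMu
  have h2 : (dotPart S)⁻¹ * dotPart S = 1 := nonsing_inv_mul _ hMu
  have hprod : S * (dotPart S)⁻¹ * T
      = dotPart S - ddotPart S * (dotPart S)⁻¹ * ddotPart S := by
    have hgen : (dotPart S + ddotPart S) * (dotPart S)⁻¹ * (dotPart S - ddotPart S)
        = dotPart S - ddotPart S * (dotPart S)⁻¹ * ddotPart S := by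
      rw [add_mul, h1, add_mul, one_mul, mul_sub,
        mul_assoc (ddotPart S) ((dotPart S)⁻¹) (dotPart S), h2, mul_one]
      abel
    rw [hS_eq, hT_eq] at hgen
    exact hgen
  set X := ddotPart S * (dotPart S)⁻¹ * ddotPart S with hXdef
  have hdet_prod : S.det * S.det = (dotPart S - X).det * (dotPart S).det := by
    rw [← hprod, det_mul, det_mul, det_nonsing_inv, Ring.inverse_eq_inv, hT_det]
    field_simp
  have hX_psd : X.PosSemidef := by
    have := (hM_pd.inv.posSemidef).conjTranspose_mul_mul_same (ddotPart S)
    rwa [hE_herm] at this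
  set R := (open scoped MatrixOrder in CFC.sqrt (dotPart S)) with hRdef
  have hR_psd : R.PosSemidef := (open scoped MatrixOrder in (CFC.sqrt_nonneg (dotPart S)).posSemidef)
  have hRR : R * R = dotPart S :=
    (open scoped MatrixOrder in CFC.sqrt_mul_sqrt_self (dotPart S) hM_pd.posSemidef.nonneg)
  have hRdet : R.det * R.det = (dotPart S).det := by rw [← det_mul, hRR]
  have hRdet_ne : R.det ≠ 0 := by
    intro h
    rw [h, mul_zero] at hRdet
    exact hMdet_ne hRdet.symm
  have hRu : IsUnit R.det := isUnit_iff_ne_zero.mpr hRdet_ne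
  have hr1 : R * R⁻¹ = 1 := mul_nonsing_inv _ hRu
  have hr2 : R⁻¹ * R = 1 := nonsing_inv_mul _ hRu
  have hRinv_herm : (R⁻¹)ᴴ = R⁻¹ := hR_psd.1.inv
  set A := R⁻¹ * (dotPart S - X) * R⁻¹ with hAdef
  have hA_psd : A.PosSemidef := by
    have := hSchur.conjTranspose_mul_mul_same R⁻¹
    rwa [hRinv_herm] at this
  have hMXdet_pos : 0 < (dotPart S - X).det := by
    nlinarith [hdet_prod, mul_pos hS.det_pos hS.det_pos, hMdet_pos]
  have hA_det : A.det * (dotPart S).det = (dotPart S - X).det := by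
    have hAd : A.det = R.det⁻¹ * (dotPart S - X).det * R.det⁻¹ := by
      rw [hAdef, det_mul, det_mul, det_nonsing_inv, Ring.inverse_eq_inv]
    rw [hAd, ← hRdet]
    field_simp
  have hA_pd : A.PosDef := by
    refine auxPosDefOfPsd hA_psd (fun h => ?_)
    rw [h, zero_mul] at hA_det
    exact hMXdet_pos.ne' hA_det.symm
  have hRMR : R⁻¹ * dotPart S * R⁻¹ = 1 := by
    rw [← hRR, ← mul_assoc, hr2, one_mul, hr1]
  have h1A : (1 : Matrix (Fin N ⊕ Fin N) (Fin N ⊕ Fin N) ℝ) - A = R⁻¹ * X * R⁻¹ := by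
    rw [hAdef, ← hRMR]
    noncomm_ring
  have h1A_psd : ((1 : Matrix (Fin N ⊕ Fin N) (Fin N ⊕ Fin N) ℝ) - A).PosSemidef := by
    rw [h1A]
    have := hX_psd.conjTranspose_mul_mul_same R⁻¹
    rwa [hRinv_herm] at this
  obtain ⟨hAle, hAiff⟩ := auxCoreDetLeOne hA_pd h1A_psd
  have h3 : (dotPart S - X).det ≤ (dotPart S).det := by
    nlinarith [hAle, hMdet_pos, hA_det]
  have hdet_le : S.det ≤ (dotPart S).det := by
    nlinarith [hdet_prod, h3, hS.det_pos, hMdet_pos, sq_nonneg (S.det - (dotPart S).det)]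
  refine ⟨hdet_le, ⟨?_, ?_⟩, ?_, ?_⟩
  · intro heq
    have hMX_eq : (dotPart S - X).det = (dotPart S).det := by
      have h := hdet_prod
      rw [heq] at h
      exact (mul_right_cancel₀ hMdet_ne h.symm)
    have hA1 : A.det = 1 := by
      have : A.det * (dotPart S).det = 1 * (dotPart S).det := by
        rw [hA_det, hMX_eq, one_mul]
      exact mul_right_cancel₀ hMdet_ne this
    have hAone : A = 1 := hAiff.mp hA1
    have hXzero : X = 0 := by
      have h0 : R⁻¹ * X * R⁻¹ = 0 := by rw [← h1A, hAone, sub_self]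
      have hX : X = R * (R⁻¹ * X * R⁻¹) * R := by
        rw [show R * (R⁻¹ * X * R⁻¹) * R = (R * R⁻¹) * X * (R⁻¹ * R) from by noncomm_ring,
          hr1, hr2, one_mul, mul_one]
      rw [hX, h0, mul_zero, zero_mul]
    have hEv : ∀ y, (ddotPart S) *ᵥ y = 0 := by
      intro y
      by_contra hne
      have hpos := hM_pd.inv.dotProduct_mulVec_pos hne
      have hzero : star ((ddotPart S) *ᵥ y) ⬝ᵥ (dotPart S)⁻¹ *ᵥ ((ddotPart S) *ᵥ y) = 0 := by
        have hXy : X *ᵥ y = 0 := by rw [hXzero, zero_mulVec]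
        have : star ((ddotPart S) *ᵥ y) ⬝ᵥ (dotPart S)⁻¹ *ᵥ ((ddotPart S) *ᵥ y)
            = star y ⬝ᵥ X *ᵥ y := by
          rw [star_mulVec, hE_herm, hXdef]
          rw [← mulVec_mulVec, ← mulVec_mulVec]
          simp only [dotProduct_mulVec, vecMul_vecMul]
        rw [this, hXy, dotProduct_zero]
      rw [hzero] at hpos
      exact lt_irrefl 0 hpos
    ext i j
    have := congrFun (hEv (Pi.single j 1)) i
    simpa [Matrix.mulVec_single] using this
  · intro h0
    have hSd : S = dotPart S := sub_eq_zero.mp (by rw [← hE_eq]; exact h0)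
    conv_lhs => rw [hSd]
  · exact div_pos hS.det_pos hMdet_pos
  · exact (div_le_one hMdet_pos).mpr hdet_le
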